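/- For a nilpotent matrix e in gl_n(C) with Jordan type given by a partition d = [d_1,...,d_N] of n, the dimension (over C) of the centralizer of e in gl_n(C) equals the sum over i,j of min(d_i, d_j). -/
import Mathlib


open scoped Matrix

/-- The nilpotent matrix in Jordan normal form with Jordan blocks of sizes
`d 0, …, d (N-1)`, realized on the index type `Σ i, Fin (d i)`.  The entry in
row `⟨i, a⟩` and column `⟨j, b⟩` is `1` exactly when the two indices lie in the
same block (`i = j`) and `b = a + 1`. -/
noncomputable def jordanMatrix {N : ℕ} (d : Fin N → ℕ) :
    Matrix (Σ i : Fin N, Fin (d i)) (Σ i : Fin N, Fin (d i)) ℂ :=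
  fun p q =>
    if _h : p.1 = q.1 then (if (q.2 : ℕ) = (p.2 : ℕ) + 1 then 1 else 0) else 0

namespace JordanAux

variable {N : ℕ} (d : Fin N → ℕ)

lemma jordan_mul_apply (X : Matrix (Σ i, Fin (d i)) (Σ i, Fin (d i)) ℂ)
    (i : Fin N) (a : Fin (d i)) (q : Σ i, Fin (d i)) :
    (jordanMatrix d * X) ⟨i, a⟩ q =
      if h : (a : ℕ) + 1 < d i then X ⟨i, ⟨a + 1, h⟩⟩ q else 0 := by
  rw [Matrix.mul_apply]
  split
  case isTrue h =>
    rw [Finset.sum_eq_single (⟨i, ⟨a + 1, h⟩⟩ : Σ i, Fin (d i))]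
    · simp [jordanMatrix]
    · rintro ⟨i', a'⟩ - hne
      rcases eq_or_ne i i' with rfl | hii
      · have hv : (a' : ℕ) ≠ (a : ℕ) + 1 :=
          fun hv => hne (congrArg (Sigma.mk i) (Fin.ext hv))
        simp [jordanMatrix, hv]
      · simp [jordanMatrix, hii]
    · simp
  case isFalse h =>
    apply Finset.sum_eq_zero
    rintro ⟨i', a'⟩ -
    rcases eq_or_ne i i' with rfl | hii
    · have hv : (a' : ℕ) ≠ (a : ℕ) + 1 := fun hv => h (hv ▸ a'.isLt)
      simp [jordanMatrix, hv]
    · simp [jordanMatrix, hii]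

lemma mul_jordan_apply (X : Matrix (Σ i, Fin (d i)) (Σ i, Fin (d i)) ℂ)
    (p : Σ i, Fin (d i)) (j : Fin N) (b : Fin (d j)) :
    (X * jordanMatrix d) p ⟨j, b⟩ =
      if _h : 0 < (b : ℕ) then
        X p ⟨j, ⟨(b : ℕ) - 1, lt_of_le_of_lt (Nat.sub_le _ _) b.isLt⟩⟩ else 0 := by
  rw [Matrix.mul_apply]
  split
  case isTrue h =>
    rw [Finset.sum_eq_single (⟨j, ⟨(b : ℕ) - 1, lt_of_le_of_lt (Nat.sub_le _ _) b.isLt⟩⟩ :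
        Σ i, Fin (d i))]
    · have hb : (b : ℕ) = ((b : ℕ) - 1) + 1 := by omega
      simp [jordanMatrix, ← hb]
    · rintro ⟨j', b'⟩ - hne
      rcases eq_or_ne j j' with rfl | hjj
      · by_cases hv : (b : ℕ) = (b' : ℕ) + 1
        · exact absurd (congrArg (Sigma.mk j)
            (Fin.ext (show (b' : ℕ) = (b : ℕ) - 1 by omega))) hne
        · simp [jordanMatrix, hv]
      · simp [jordanMatrix, Ne.symm hjj]
    · simp
  case isFalse h =>
    apply Finset.sum_eq_zero
    rintro ⟨j', b'⟩ -
    rcases eq_or_ne j j' with rfl | hjj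
    · have hv : (b : ℕ) ≠ (b' : ℕ) + 1 := by omega
      simp [jordanMatrix, hv]
    · simp [jordanMatrix, Ne.symm hjj]

variable {X : Matrix (Σ i, Fin (d i)) (Σ i, Fin (d i)) ℂ}

lemma Xcongr {i j : Fin N} {a a' : Fin (d i)} {b b' : Fin (d j)}
    (haa : (a : ℕ) = (a' : ℕ)) (hbb : (b : ℕ) = (b' : ℕ)) :
    X ⟨i, a⟩ ⟨j, b⟩ = X ⟨i, a'⟩ ⟨j, b'⟩ := by
  rw [congrArg (Sigma.mk i) (Fin.ext haa), congrArg (Sigma.mk j) (Fin.ext hbb)]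

lemma rel (hX : jordanMatrix d * X = X * jordanMatrix d)
    (i j : Fin N) (a : Fin (d i)) (b : Fin (d j)) :
    (if h : (a : ℕ) + 1 < d i then X ⟨i, ⟨a + 1, h⟩⟩ ⟨j, b⟩ else 0) =
    (if _h : 0 < (b : ℕ) then
        X ⟨i, a⟩ ⟨j, ⟨(b : ℕ) - 1, lt_of_le_of_lt (Nat.sub_le _ _) b.isLt⟩⟩ else 0) := by
  rw [← jordan_mul_apply, ← mul_jordan_apply, hX]

lemma L1 (hX : jordanMatrix d * X = X * jordanMatrix d) (i j : Fin N) :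
    ∀ (n : ℕ) (a : Fin (d i)) (b : Fin (d j)), (a : ℕ) = n →
    X ⟨i, a⟩ ⟨j, b⟩ =
      if (a : ℕ) ≤ (b : ℕ) then
        X ⟨i, ⟨0, a.pos⟩⟩ ⟨j, ⟨(b : ℕ) - (a : ℕ), lt_of_le_of_lt (Nat.sub_le _ _) b.isLt⟩⟩
      else 0 := by
  intro n
  induction n with
  | zero =>
    intro a b ha
    rw [if_pos (by omega)]
    exact Xcongr d ha (show (b : ℕ) = (b : ℕ) - (a : ℕ) by omega)
  | succ m ih =>
    intro a b ha
    have hm : m + 1 < d i := ha ▸ a.isLt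
    have h1 := rel d hX i j ⟨m, by omega⟩ b
    rw [dif_pos (show m + 1 < d i from hm)] at h1
    have h0 : X ⟨i, a⟩ ⟨j, b⟩ = X ⟨i, ⟨m + 1, hm⟩⟩ ⟨j, b⟩ := Xcongr d ha rfl
    rw [h0, h1]
    by_cases hb : 0 < (b : ℕ)
    · rw [dif_pos hb, ih ⟨m, by omega⟩ _ rfl]
      by_cases hab : (a : ℕ) ≤ (b : ℕ)
      · rw [if_pos (show m ≤ (b : ℕ) - 1 by omega), if_pos hab]
        exact Xcongr d rfl (show (b : ℕ) - 1 - m = (b : ℕ) - (a : ℕ) by omega)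
      · rw [if_neg (show ¬ (m ≤ (b : ℕ) - 1) by omega), if_neg hab]
    · rw [dif_neg hb, if_neg (by omega)]

lemma L2 (hX : jordanMatrix d * X = X * jordanMatrix d) (i j : Fin N)
    (h0 : 0 < d i) (c : Fin (d j)) (hc : (c : ℕ) + d i < d j) :
    X ⟨i, ⟨0, h0⟩⟩ ⟨j, c⟩ = 0 := by
  have ha : d i - 1 < d i := by omega
  have hb : (c : ℕ) + d i < d j := hc
  have h1 := rel d hX i j ⟨d i - 1, ha⟩ ⟨(c : ℕ) + d i, hb⟩
  rw [dif_neg (show ¬ (d i - 1 + 1 < d i) by omega),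
      dif_pos (show 0 < (c : ℕ) + d i by omega)] at h1
  have h2 := L1 d hX i j (d i - 1) ⟨d i - 1, ha⟩
      ⟨(c : ℕ) + d i - 1, by omega⟩ rfl
  rw [if_pos (show d i - 1 ≤ (c : ℕ) + d i - 1 by omega)] at h2
  have h3 : X ⟨i, ⟨0, h0⟩⟩ ⟨j, c⟩ =
      X ⟨i, ⟨d i - 1, ha⟩⟩ ⟨j, ⟨(c : ℕ) + d i - 1, by omega⟩⟩ := by
    rw [h2]
    exact Xcongr d rfl (show (c : ℕ) = (c : ℕ) + d i - 1 - (d i - 1) by omega)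
  rw [h3, ← h1]

lemma entry_formula (hX : jordanMatrix d * X = X * jordanMatrix d)
    (i j : Fin N) (a : Fin (d i)) (b : Fin (d j)) :
    X ⟨i, a⟩ ⟨j, b⟩ =
      if (a : ℕ) ≤ (b : ℕ) ∧ d j - min (d i) (d j) ≤ (b : ℕ) - (a : ℕ) then
        X ⟨i, ⟨0, a.pos⟩⟩ ⟨j, ⟨(b : ℕ) - (a : ℕ), lt_of_le_of_lt (Nat.sub_le _ _) b.isLt⟩⟩
      else 0 := by
  rw [L1 d hX i j a a b rfl]
  by_cases hab : (a : ℕ) ≤ (b : ℕ)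
  · rw [if_pos hab]
    by_cases h2 : d j - min (d i) (d j) ≤ (b : ℕ) - (a : ℕ)
    · rw [if_pos ⟨hab, h2⟩]
    · rw [if_neg (by tauto)]
      have hbj := b.isLt
      exact L2 d hX i j a.pos _ (show (b : ℕ) - (a : ℕ) + d i < d j by omega)
  · rw [if_neg hab, if_neg (by tauto)]

lemma jordan_mul_apply' (X : Matrix (Σ i, Fin (d i)) (Σ i, Fin (d i)) ℂ)
    (i : Fin N) (av : ℕ) (ha : av < d i) (q : Σ i, Fin (d i)) :
    (jordanMatrix d * X) ⟨i, ⟨av, ha⟩⟩ q =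
      if h : av + 1 < d i then X ⟨i, ⟨av + 1, h⟩⟩ q else 0 :=
  jordan_mul_apply d X i ⟨av, ha⟩ q

lemma mul_jordan_apply' (X : Matrix (Σ i, Fin (d i)) (Σ i, Fin (d i)) ℂ)
    (p : Σ i, Fin (d i)) (j : Fin N) (bv : ℕ) (hb : bv < d j) :
    (X * jordanMatrix d) p ⟨j, ⟨bv, hb⟩⟩ =
      if _h : 0 < bv then
        X p ⟨j, ⟨bv - 1, lt_of_le_of_lt (Nat.sub_le _ _) hb⟩⟩ else 0 :=
  mul_jordan_apply d X p j ⟨bv, hb⟩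

/-- The parameter space recording the free diagonal coefficients. -/
abbrev Par := ∀ p : Fin N × Fin N, Fin (min (d p.1) (d p.2)) → ℂ

/-- The block-Toeplitz matrix with given diagonal parameters. -/
noncomputable def psi (c : Par d) : Matrix (Σ i, Fin (d i)) (Σ i, Fin (d i)) ℂ :=
  fun p q =>
    if h : (p.2 : ℕ) ≤ (q.2 : ℕ) ∧
        d q.1 - min (d p.1) (d q.1) ≤ (q.2 : ℕ) - (p.2 : ℕ) then
      c (p.1, q.1) ⟨(q.2 : ℕ) - (p.2 : ℕ) - (d q.1 - min (d p.1) (d q.1)),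
        show (q.2 : ℕ) - (p.2 : ℕ) - (d q.1 - min (d p.1) (d q.1)) < min (d p.1) (d q.1)
          from by have := q.2.isLt; omega⟩
    else 0

lemma psi_apply (c : Par d) (i j : Fin N) (av bv : ℕ) (ha : av < d i) (hb : bv < d j) :
    psi d c ⟨i, ⟨av, ha⟩⟩ ⟨j, ⟨bv, hb⟩⟩ =
      if h : av ≤ bv ∧ d j - min (d i) (d j) ≤ bv - av then
        c (i, j) ⟨bv - av - (d j - min (d i) (d j)),
          show bv - av - (d j - min (d i) (d j)) < min (d i) (d j) from by omega⟩
      else 0 := rfl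

/-- The extraction map. -/
noncomputable def phi (X : Matrix (Σ i, Fin (d i)) (Σ i, Fin (d i)) ℂ) : Par d :=
  fun p k =>
    X ⟨p.1, ⟨0, k.pos.trans_le (min_le_left _ _)⟩⟩
      ⟨p.2, ⟨d p.2 - min (d p.1) (d p.2) + k,
        show d p.2 - min (d p.1) (d p.2) + (k : ℕ) < d p.2
          from by have := k.isLt; omega⟩⟩

lemma psi_comm (c : Par d) :
    jordanMatrix d * psi d c = psi d c * jordanMatrix d := by
  ext ⟨i, a⟩ ⟨j, b⟩
  obtain ⟨av, ha⟩ := a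
  obtain ⟨bv, hb⟩ := b
  rw [jordan_mul_apply' d _ i av ha, mul_jordan_apply' d _ _ j bv hb]
  by_cases h1 : av + 1 < d i
  · rw [dif_pos h1]
    by_cases h2 : 0 < bv
    · rw [dif_pos h2, psi_apply, psi_apply]
      by_cases h3 : av + 1 ≤ bv ∧ d j - min (d i) (d j) ≤ bv - (av + 1)
      · rw [dif_pos h3, dif_pos (show av ≤ bv - 1 ∧
            d j - min (d i) (d j) ≤ bv - 1 - av from ⟨by omega, by omega⟩)]
        exact congrArg _ (Fin.ext (show bv - (av + 1) - (d j - min (d i) (d j)) =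
          bv - 1 - av - (d j - min (d i) (d j)) by omega))
      · rw [dif_neg h3, dif_neg (show ¬ (av ≤ bv - 1 ∧
            d j - min (d i) (d j) ≤ bv - 1 - av) by omega)]
    · rw [dif_neg h2, psi_apply, dif_neg (show ¬ (av + 1 ≤ bv ∧
          d j - min (d i) (d j) ≤ bv - (av + 1)) by omega)]
  · rw [dif_neg h1]
    by_cases h2 : 0 < bv
    · rw [dif_pos h2, psi_apply, dif_neg (show ¬ (av ≤ bv - 1 ∧
          d j - min (d i) (d j) ≤ bv - 1 - av) by omega)]
    · rw [dif_neg h2]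

lemma phi_psi (c : Par d) : phi d (psi d c) = c := by
  funext p k
  have hk := k.isLt
  show psi d c ⟨p.1, ⟨0, _⟩⟩ ⟨p.2, ⟨d p.2 - min (d p.1) (d p.2) + (k : ℕ), _⟩⟩ = c p k
  rw [psi_apply d c p.1 p.2, dif_pos ⟨by omega, by omega⟩]
  exact congrArg (c p) (Fin.ext (show d p.2 - min (d p.1) (d p.2) + (k : ℕ) - 0 -
    (d p.2 - min (d p.1) (d p.2)) = (k : ℕ) by omega))

lemma psi_phi (hX : jordanMatrix d * X = X * jordanMatrix d) : psi d (phi d X) = X := by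
  ext ⟨i, a⟩ ⟨j, b⟩
  obtain ⟨av, ha⟩ := a
  obtain ⟨bv, hb⟩ := b
  rw [psi_apply, entry_formula d hX i j ⟨av, ha⟩ ⟨bv, hb⟩]
  by_cases h : av ≤ bv ∧ d j - min (d i) (d j) ≤ bv - av
  · rw [dif_pos h, if_pos h]
    show X ⟨i, ⟨0, _⟩⟩ ⟨j, ⟨d j - min (d i) (d j) + (bv - av - (d j - min (d i) (d j))), _⟩⟩ = _
    exact Xcongr d rfl (show d j - min (d i) (d j) +
      (bv - av - (d j - min (d i) (d j))) = bv - av by omega)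
  · rw [dif_neg h, if_neg h]

lemma phi_add (X Y : Matrix (Σ i, Fin (d i)) (Σ i, Fin (d i)) ℂ) :
    phi d (X + Y) = phi d X + phi d Y := rfl

lemma phi_smul (r : ℂ) (X : Matrix (Σ i, Fin (d i)) (Σ i, Fin (d i)) ℂ) :
    phi d (r • X) = r • phi d X := rfl

end JordanAux

/-- For a nilpotent matrix `e ∈ gl_n(ℂ)` with Jordan type given by
a partition `d = [d_1, …, d_N]` of `n` (so `d` is weakly decreasing and sums to
`n`), the dimension over `ℂ` of the centralizer `{x : x·e = e·x}` of `e` in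
`gl_n(ℂ)` equals `∑_{i,j} min (d i) (d j)`. -/
theorem centralizer_finrank_of_jordan_type
    {N : ℕ} (d : Fin N → ℕ)
    (n : ℕ) (hsum : ∑ i, d i = n)
    (hsorted : ∀ i j : Fin N, i ≤ j → d j ≤ d i)
    (e : Matrix (Σ i : Fin N, Fin (d i)) (Σ i : Fin N, Fin (d i)) ℂ)
    (he : e = jordanMatrix d) :
    Module.finrank ℂ
      (LinearMap.ker (LinearMap.mulLeft ℂ e - LinearMap.mulRight ℂ e)) =
      ∑ i, ∑ j, min (d i) (d j) := by
  subst he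
  have hker : ∀ Y : Matrix (Σ i : Fin N, Fin (d i)) (Σ i : Fin N, Fin (d i)) ℂ,
      Y ∈ LinearMap.ker (LinearMap.mulLeft ℂ (jordanMatrix d) -
        LinearMap.mulRight ℂ (jordanMatrix d)) ↔
      jordanMatrix d * Y = Y * jordanMatrix d := by
    intro Y
    rw [LinearMap.mem_ker, LinearMap.sub_apply, LinearMap.mulLeft_apply,
      LinearMap.mulRight_apply, sub_eq_zero]
  let E : (LinearMap.ker (LinearMap.mulLeft ℂ (jordanMatrix d) -
      LinearMap.mulRight ℂ (jordanMatrix d))) ≃ₗ[ℂ] JordanAux.Par d :=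
    { toFun := fun X => JordanAux.phi d X.1
      map_add' := fun X Y => JordanAux.phi_add d X.1 Y.1
      map_smul' := fun r X => JordanAux.phi_smul d r X.1
      invFun := fun c => ⟨JordanAux.psi d c, (hker _).2 (JordanAux.psi_comm d c)⟩
      left_inv := fun X => Subtype.ext (JordanAux.psi_phi d ((hker X.1).1 X.2))
      right_inv := fun c => JordanAux.phi_psi d c }
  rw [LinearEquiv.finrank_eq E]
  rw [Module.finrank_pi_fintype ℂ]
  simp only [Module.finrank_fintype_fun_eq_card, Fintype.card_fin]
  exact Fintype.sum_prod_type' (f := fun i j => min (d i) (d j))
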